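/- Let (H, ◁◁, K) be a right Hopf module with H, K cocommutative Hopf algebras, and let T : H → K be an 𝒪-Hopf operator: a coalgebra map with T(e)T(f) = T((e ◁◁ T(f₍₁₎)) f₍₂₎). Then the product e ⋆_T f := (e ◁◁ T(f₍₁₎)) f₍₂₎ on H is associative with unit 1_H. -/

import Mathlib

open TensorProduct

/-- The product `e ⋆_T f := (e ◁◁ T f₍₁₎) f₍₂₎` on `H`, for a right Hopf module action
`act` of `K` on `H` and a linear map `T : H → K`. -/
noncomputable def starT {R H K : Type*} [CommRing R] [Ring H] [Ring K]
    [HopfAlgebra R H] [HopfAlgebra R K]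
    (act : H →ₗ[R] K →ₗ[R] H) (T : H →ₗ[R] K) (e f : H) : H :=
  (LinearMap.mul' R H) ((TensorProduct.map ((act e) ∘ₗ T) LinearMap.id) (Coalgebra.comul f))

open Coalgebra in
private lemma star_repr {R H K : Type*} [CommRing R] [Ring H] [Ring K]
    [HopfAlgebra R H] [HopfAlgebra R K]
    (act : H →ₗ[R] K →ₗ[R] H) (T : H →ₗ[R] K) (e f : H)
    (r : Coalgebra.Repr R f (H × H)) :
    starT act T e f = ∑ i ∈ r.index, act e (T (r.left i)) * r.right i := by
  rw [starT, ← r.eq, map_sum, map_sum]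
  simp [LinearMap.mul'_apply]

open Coalgebra in
set_option synthInstance.maxHeartbeats 1000000 in
set_option maxHeartbeats 1600000 in
/-- Let `(H, ◁◁, K)` be a right Hopf module of cocommutative Hopf algebras
and `T : H → K` an 𝒪-Hopf operator.  Then `⋆_T` is associative with unit `1_H`. -/
theorem starT_associative_with_unit
    {R H K : Type*} [CommRing R] [Ring H] [Ring K]
    [HopfAlgebra R H] [HopfAlgebra R K]
    -- cocommutativity
    (hcoH : ∀ x : H, (TensorProduct.comm R H H) (Coalgebra.comul x) = Coalgebra.comul x)
    (hcoK : ∀ x : K, (TensorProduct.comm R K K) (Coalgebra.comul x) = Coalgebra.comul x)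
    -- right Hopf module structure
    (act : H →ₗ[R] K →ₗ[R] H)
    (hact_one : ∀ h : H, act h 1 = h)
    (hone_act : ∀ k : K, act 1 k = Coalgebra.counit (R := R) k • (1 : H))
    (hact_mul : ∀ (h₁ h₂ : H) (k : K),
      act (h₁ * h₂) k
        = (LinearMap.mul' R H) ((TensorProduct.map (act h₁) (act h₂)) (Coalgebra.comul k)))
    (hact_comp : ∀ (h : H) (k k' : K), act (act h k) k' = act h (k * k'))
    (hact_comul : ∀ (h : H) (k : K),
      Coalgebra.comul (act h k)
        = (TensorProduct.map (TensorProduct.lift act) (TensorProduct.lift act))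
            ((TensorProduct.tensorTensorTensorComm R H H K K)
              (Coalgebra.comul h ⊗ₜ[R] Coalgebra.comul k)))
    (hact_antipode : ∀ (h : H) (k : K),
      HopfAlgebra.antipode (R := R) (act h k) = act (HopfAlgebra.antipode (R := R) h) k)
    -- `T` is a coalgebra morphism
    (T : H →ₗ[R] K)
    (hTcomul : ∀ e : H, Coalgebra.comul (T e) = (TensorProduct.map T T) (Coalgebra.comul e))
    (hTcounit : ∀ e : H, Coalgebra.counit (R := R) (T e) = Coalgebra.counit (R := R) e)
    -- `T` is an 𝒪-Hopf operator
    (hT : ∀ e f : H, T e * T f = T (starT act T e f)) :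
    (∀ e f g : H, starT act T (starT act T e f) g = starT act T e (starT act T f g)) ∧
    (∀ e : H, starT act T e 1 = e) ∧
    (∀ e : H, starT act T 1 e = e) := by
  classical
  have hs1 : ∀ e : H, starT act T e 1 = act e (T 1) := by
    intro e
    rw [starT, Bialgebra.comul_one, Algebra.TensorProduct.one_def]
    simp [LinearMap.mul'_apply]
  have h11 : starT act T 1 1 = 1 := by
    rw [hs1, hone_act, hTcounit, Bialgebra.counit_one, one_smul]
  have hmul : T 1 * T 1 = T 1 := by rw [hT, h11]
  have hcom : Coalgebra.comul (R := R) (T (1:H)) = T 1 ⊗ₜ[R] T 1 := by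
    rw [hTcomul, Bialgebra.comul_one, Algebra.TensorProduct.one_def, map_tmul]
  have hS : HopfAlgebra.antipode (R := R) (T 1) * T 1 = 1 := by
    have h := HopfAlgebra.mul_antipode_rTensor_comul_apply (R := R) (T (1 : H))
    rw [hcom, LinearMap.rTensor_tmul, LinearMap.mul'_apply, hTcounit,
      Bialgebra.counit_one, (algebraMap R K).map_one] at h
    exact h
  have hT1 : T (1 : H) = 1 := by
    calc T (1:H) = 1 * T 1 := (one_mul _).symm
    _ = (HopfAlgebra.antipode (R := R) (T 1) * T 1) * T 1 := by rw [hS]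
    _ = HopfAlgebra.antipode (R := R) (T 1) * (T 1 * T 1) := by rw [mul_assoc]
    _ = 1 := by rw [hmul, hS]
  refine ⟨?_, ?_, ?_⟩
  · -- associativity
    intro e f g
    set rf := ℛ R f with hrf
    set rg := ℛ R g with hrg
    have rg1 : ∀ i, Coalgebra.Repr R (rg.left i) (H × H) := fun i => ℛ R _
    have rg2 : ∀ i, Coalgebra.Repr R (rg.right i) (H × H) := fun i => ℛ R _
    have rg11 : ∀ i m, Coalgebra.Repr R ((rg1 i).left m) (H × H) := fun i m => ℛ R _
    have rc : ∀ i n, Coalgebra.Repr R ((rg2 i).left n) (H × H) := fun i n => ℛ R _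
    have rd : ∀ i n, Coalgebra.Repr R ((rg2 i).right n) (H × H) := fun i n => ℛ R _
    -- LHS expansion
    have hL2 : ∀ i, act (starT act T e f) (T (rg.left i))
        = ∑ j ∈ rf.index, ∑ m ∈ (rg1 i).index,
            act e (T (starT act T (rf.left j) ((rg1 i).left m)))
              * act (rf.right j) (T ((rg1 i).right m)) := by
      intro i
      rw [star_repr act T e f rf, map_sum, LinearMap.sum_apply]
      refine Finset.sum_congr rfl fun j _ => ?_
      rw [hact_mul, hTcomul, ← (rg1 i).eq, map_sum, map_sum, map_sum]
      refine Finset.sum_congr rfl fun m _ => ?_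
      rw [map_tmul, map_tmul, LinearMap.mul'_apply, hact_comp, hT]
    have hLHS : starT act T (starT act T e f) g
        = ∑ j ∈ rf.index, ∑ i ∈ rg.index, ∑ m ∈ (rg1 i).index, ∑ p ∈ (rg11 i m).index,
            (act e (T (act (rf.left j) (T ((rg11 i m).left p)) * (rg11 i m).right p))
              * act (rf.right j) (T ((rg1 i).right m))) * rg.right i := by
      rw [star_repr act T (starT act T e f) g rg]
      rw [show ∑ i ∈ rg.index, act (starT act T e f) (T (rg.left i)) * rg.right i
          = ∑ i ∈ rg.index, ∑ j ∈ rf.index, ∑ m ∈ (rg1 i).index, ∑ p ∈ (rg11 i m).index,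
            (act e (T (act (rf.left j) (T ((rg11 i m).left p)) * (rg11 i m).right p))
              * act (rf.right j) (T ((rg1 i).right m))) * rg.right i from ?_,
        Finset.sum_comm]
      refine Finset.sum_congr rfl fun i _ => ?_
      rw [hL2 i, Finset.sum_mul]
      refine Finset.sum_congr rfl fun j _ => ?_
      rw [Finset.sum_mul]
      refine Finset.sum_congr rfl fun m _ => ?_
      rw [star_repr act T (rf.left j) _ (rg11 i m), map_sum, map_sum, Finset.sum_mul,
        Finset.sum_mul]
    -- RHS expansion
    have hcomulstar : Coalgebra.comul (R := R) (starT act T f g)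
        = ∑ i ∈ rg.index, ∑ j ∈ rf.index, ∑ m ∈ (rg1 i).index, ∑ n ∈ (rg2 i).index,
            (act (rf.left j) (T ((rg1 i).left m)) * (rg2 i).left n)
              ⊗ₜ[R] (act (rf.right j) (T ((rg1 i).right m)) * (rg2 i).right n) := by
      rw [star_repr act T f g rg, map_sum]
      refine Finset.sum_congr rfl fun i _ => ?_
      rw [Bialgebra.comul_mul, hact_comul, hTcomul, ← rf.eq, ← (rg1 i).eq, ← (rg2 i).eq]
      simp only [map_sum, sum_tmul, tmul_sum, tensorTensorTensorComm_tmul, map_tmul, lift.tmul,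
        Finset.sum_mul, Finset.mul_sum, Algebra.TensorProduct.tmul_mul_tmul]
      rw [Finset.sum_comm]
      exact (Finset.sum_congr rfl fun m _ => Finset.sum_comm).trans Finset.sum_comm
    have hRHS : starT act T e (starT act T f g)
        = ∑ j ∈ rf.index, ∑ i ∈ rg.index, ∑ m ∈ (rg1 i).index, ∑ n ∈ (rg2 i).index,
            act e (T (act (rf.left j) (T ((rg1 i).left m)) * (rg2 i).left n))
              * (act (rf.right j) (T ((rg1 i).right m)) * (rg2 i).right n) := by
      rw [starT, hcomulstar]
      simp only [map_sum, map_tmul, LinearMap.mul'_apply, LinearMap.coe_comp,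
        Function.comp_apply, LinearMap.id_coe, id_eq]
      rw [Finset.sum_comm]
    -- abbreviations for repr component splits
    have hsplit_a : ∀ i m, Coalgebra.comul (R := R) ((rg1 i).left m)
        = ∑ p ∈ (rg11 i m).index, (rg11 i m).left p ⊗ₜ[R] (rg11 i m).right p :=
      fun i m => ((rg11 i m).eq).symm
    have hsplit_G1 : ∀ i, Coalgebra.comul (R := R) (rg.left i)
        = ∑ m ∈ (rg1 i).index, (rg1 i).left m ⊗ₜ[R] (rg1 i).right m :=
      fun i => ((rg1 i).eq).symm
    have hsplit_G2 : ∀ i, Coalgebra.comul (R := R) (rg.right i)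
        = ∑ n ∈ (rg2 i).index, (rg2 i).left n ⊗ₜ[R] (rg2 i).right n :=
      fun i => ((rg2 i).eq).symm
    have hsplit_d : ∀ i n, Coalgebra.comul (R := R) ((rg2 i).right n)
        = ∑ q ∈ (rd i n).index, (rd i n).left q ⊗ₜ[R] (rd i n).right q :=
      fun i n => ((rd i n).eq).symm
    have VW := Coalgebra.sum_tmul_tmul_eq rg rg1 rg2
    -- C1 : E_L = E3
    have t1 : (∑ i ∈ rg.index, ∑ m ∈ (rg1 i).index, ∑ p ∈ (rg11 i m).index,
          ((rg11 i m).left p ⊗ₜ[R] (rg11 i m).right p) ⊗ₜ[R] ((rg1 i).right m ⊗ₜ[R] rg.right i))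
        = ∑ i ∈ rg.index, ∑ m ∈ (rg1 i).index, ∑ n ∈ (rg2 i).index,
          ((rg1 i).left m ⊗ₜ[R] (rg1 i).right m) ⊗ₜ[R] ((rg2 i).left n ⊗ₜ[R] (rg2 i).right n) := by
      have h := congrArg (LinearMap.rTensor (H ⊗[R] H) (Coalgebra.comul (R := R))) VW
      simp only [map_sum, LinearMap.rTensor_tmul, hsplit_a, hsplit_G1, sum_tmul] at h
      exact h.trans (Finset.sum_congr rfl fun i _ => Finset.sum_comm)
    -- C2 : E3 = N3
    have t2 : (∑ i ∈ rg.index, ∑ m ∈ (rg1 i).index, ∑ n ∈ (rg2 i).index,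
          ((rg1 i).left m ⊗ₜ[R] (rg1 i).right m) ⊗ₜ[R] ((rg2 i).left n ⊗ₜ[R] (rg2 i).right n))
        = ∑ i ∈ rg.index, ∑ n ∈ (rg2 i).index, ∑ q ∈ (rd i n).index,
          (rg.left i ⊗ₜ[R] (rg2 i).left n) ⊗ₜ[R] ((rd i n).left q ⊗ₜ[R] (rd i n).right q) := by
      have h := congrArg (LinearMap.lTensor (H ⊗[R] H) (Coalgebra.comul (R := R)) ∘ₗ
        (TensorProduct.assoc R H H H).symm.toLinearMap) VW
      simpa only [map_sum, LinearMap.comp_apply, LinearEquiv.coe_coe, assoc_symm_tmul,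
        LinearMap.lTensor_tmul, hsplit_G2, hsplit_d, tmul_sum] using h
    -- C3 : N1 = N3
    have t3 : (∑ i ∈ rg.index, ∑ n ∈ (rg2 i).index, ∑ q ∈ (rc i n).index,
          (rg.left i ⊗ₜ[R] (rc i n).left q) ⊗ₜ[R] ((rc i n).right q ⊗ₜ[R] (rg2 i).right n))
        = ∑ i ∈ rg.index, ∑ n ∈ (rg2 i).index, ∑ q ∈ (rd i n).index,
          (rg.left i ⊗ₜ[R] (rg2 i).left n) ⊗ₜ[R] ((rd i n).left q ⊗ₜ[R] (rd i n).right q) := by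
      refine Finset.sum_congr rfl fun i _ => ?_
      have h := congrArg ((TensorProduct.assoc R H H (H ⊗[R] H)).symm.toLinearMap ∘ₗ
        (TensorProduct.mk R H (H ⊗[R] (H ⊗[R] H))) (rg.left i))
        (Coalgebra.sum_tmul_tmul_eq (rg2 i) (rc i) (rd i))
      simpa only [map_sum, LinearMap.comp_apply, mk_apply, LinearEquiv.coe_coe,
        assoc_symm_tmul] using h
    -- C4 : N1 = N2
    have t4 : (∑ i ∈ rg.index, ∑ n ∈ (rg2 i).index, ∑ q ∈ (rc i n).index,
          (rg.left i ⊗ₜ[R] (rc i n).left q) ⊗ₜ[R] ((rc i n).right q ⊗ₜ[R] (rg2 i).right n))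
        = ∑ i ∈ rg.index, ∑ n ∈ (rg2 i).index, ∑ q ∈ (rc i n).index,
          (rg.left i ⊗ₜ[R] (rc i n).right q) ⊗ₜ[R] ((rc i n).left q ⊗ₜ[R] (rg2 i).right n) := by
      refine Finset.sum_congr rfl fun i _ => Finset.sum_congr rfl fun n _ => ?_
      have h := congrArg (TensorProduct.map ((TensorProduct.mk R H H) (rg.left i))
        ((TensorProduct.mk R H H).flip ((rg2 i).right n))) (hcoH ((rg2 i).left n))
      rw [← (rc i n).eq] at h
      simp only [map_sum, comm_tmul, map_tmul, mk_apply, LinearMap.flip_apply] at h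
      exact h.symm
    -- C5 : tttComm on E3 = N1 chain
    have t5 := congrArg (TensorProduct.tensorTensorTensorComm R H H H H)
      (t2.trans (t3.symm.trans t4))
    simp only [map_sum, tensorTensorTensorComm_tmul] at t5
    -- hE : E_L = E_R
    have hE : (∑ i ∈ rg.index, ∑ m ∈ (rg1 i).index, ∑ p ∈ (rg11 i m).index,
          ((rg11 i m).left p ⊗ₜ[R] (rg11 i m).right p) ⊗ₜ[R] ((rg1 i).right m ⊗ₜ[R] rg.right i))
        = ∑ i ∈ rg.index, ∑ m ∈ (rg1 i).index, ∑ n ∈ (rg2 i).index,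
          ((rg1 i).left m ⊗ₜ[R] (rg2 i).left n) ⊗ₜ[R] ((rg1 i).right m ⊗ₜ[R] (rg2 i).right n) := by
      exact t1.trans (t2.trans (t3.symm.trans t5.symm))
    rw [hLHS, hRHS]
    refine Finset.sum_congr rfl fun j _ => ?_
    have hΦ : ∀ x y z w : H,
        ((LinearMap.mul' R H) ∘ₗ TensorProduct.map
          (((act e) ∘ₗ T) ∘ₗ (LinearMap.mul' R H) ∘ₗ
            TensorProduct.map ((act (rf.left j)) ∘ₗ T) LinearMap.id)
          ((LinearMap.mul' R H) ∘ₗ TensorProduct.map ((act (rf.right j)) ∘ₗ T) LinearMap.id))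
          ((x ⊗ₜ[R] y) ⊗ₜ[R] (z ⊗ₜ[R] w))
        = act e (T (act (rf.left j) (T x) * y)) * (act (rf.right j) (T z) * w) := by
      intro x y z w
      simp [LinearMap.mul'_apply]
    have h1 := congrArg ((LinearMap.mul' R H) ∘ₗ TensorProduct.map
          (((act e) ∘ₗ T) ∘ₗ (LinearMap.mul' R H) ∘ₗ
            TensorProduct.map ((act (rf.left j)) ∘ₗ T) LinearMap.id)
          ((LinearMap.mul' R H) ∘ₗ TensorProduct.map ((act (rf.right j)) ∘ₗ T) LinearMap.id)) hE
    simp only [map_sum, hΦ] at h1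
    refine Eq.trans ?_ h1
    refine Finset.sum_congr rfl fun i _ => Finset.sum_congr rfl fun m _ =>
      Finset.sum_congr rfl fun p _ => ?_
    rw [mul_assoc]
  · -- right unit
    intro e
    rw [hs1, hT1, hact_one]
  · -- left unit
    intro e
    rw [star_repr act T 1 e (ℛ R e)]
    have h2 := congrArg (TensorProduct.lid R H) (Coalgebra.sum_counit_tmul_eq (ℛ R e))
    simp only [map_sum, lid_tmul] at h2
    simp only [hone_act, hTcounit, smul_mul_assoc, one_mul]
    rw [h2, one_smul]
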